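/- Fix integers n ≥ 3, l ∈ [2, n−1], c ∈ [2, l]. Every element ω of the set S^{(c)}_{[l]} := {σ ∈ (S_n)_{[l]} : σ(1)<σ(2)<⋯<σ(c) and σ(c+1)<⋯<σ(l+1)} factors uniquely as ω = ζ · δ_u, where u = ω(1) ∈ [1, l−c+2], δ_u is the element of S^{(c)}_{[l]} with δ_u(i) = u+i−1 for 1 ≤ i ≤ c, and ζ ∈ (S_n)^{(c+u−1)}_{[u+1,l]}; moreover ℓ(ω) = ℓ(ζ) + ℓ(δ_u). -/

import Mathlib

/-- The simple transposition `s_i = (i, i+1)` (as a permutation of `ℕ`). -/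
def sTr (i : ℕ) : Equiv.Perm ℕ := Equiv.swap i (i + 1)

/-- The parabolic subgroup `(S_n)_{[k₁,k₂]}` generated by `s_{k₁}, …, s_{k₂}`. -/
def parab (k₁ k₂ : ℕ) : Subgroup (Equiv.Perm ℕ) :=
  Subgroup.closure {π | ∃ i : ℕ, k₁ ≤ i ∧ i ≤ k₂ ∧ π = sTr i}

/-- `(S_n)_{[k₁,k₂]}^{(c)}`: the elements `σ` of the parabolic subgroup
`(S_n)_{[k₁,k₂]}` with `σ(k₁) < σ(k₁+1) < ⋯ < σ(c)` and
`σ(c+1) < σ(c+2) < ⋯ < σ(k₂+1)`. -/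
def PQ (k₁ k₂ c : ℕ) : Set (Equiv.Perm ℕ) :=
  {σ | σ ∈ parab k₁ k₂ ∧
    (∀ a b : ℕ, k₁ ≤ a → a < b → b ≤ c → σ a < σ b) ∧
    (∀ a b : ℕ, c + 1 ≤ a → a < b → b ≤ k₂ + 1 → σ a < σ b)}

/-- The Coxeter length of `σ`, i.e. its number of inversions. -/
noncomputable def invCount (σ : Equiv.Perm ℕ) : ℕ :=
  {q : ℕ × ℕ | q.1 < q.2 ∧ σ q.2 < σ q.1}.ncard

/- ## Auxiliary lemmas -/


lemma parab_fixes {k₁ k₂ : ℕ} {σ : Equiv.Perm ℕ} (h : σ ∈ parab k₁ k₂)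
    (x : ℕ) (hx : x < k₁ ∨ k₂ + 1 < x) : σ x = x := by
  induction h using Subgroup.closure_induction with
  | mem π hπ =>
    obtain ⟨i, hi1, hi2, rfl⟩ := hπ
    apply Equiv.swap_apply_of_ne_of_ne <;> omega
  | one => rfl
  | mul a b _ _ ha hb => simp [Equiv.Perm.mul_apply, hb, ha]
  | inv a _ ha =>
    have : a (a⁻¹ x) = a x := by simp [ha]
    exact a.injective this

lemma parab_fixes_lo {k₁ k₂ : ℕ} {σ : Equiv.Perm ℕ} (h : σ ∈ parab k₁ k₂) :
    ∀ x, x < k₁ → σ x = x := fun x hx => parab_fixes h x (Or.inl hx)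

lemma parab_fixes_hi {k₁ k₂ : ℕ} {σ : Equiv.Perm ℕ} (h : σ ∈ parab k₁ k₂) :
    ∀ x, k₂ + 1 < x → σ x = x := fun x hx => parab_fixes h x (Or.inr hx)

lemma maps_interval {k₁ L : ℕ} {σ : Equiv.Perm ℕ}
    (hlo : ∀ x, x < k₁ → σ x = x) (hhi : ∀ x, L < x → σ x = x)
    {x : ℕ} (hx1 : k₁ ≤ x) (hx2 : x ≤ L) : k₁ ≤ σ x ∧ σ x ≤ L := by
  by_contra hcon
  have h1 : σ x < k₁ ∨ L < σ x := by omega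
  have h2 : σ (σ x) = σ x := by
    rcases h1 with h | h
    · exact hlo _ h
    · exact hhi _ h
  have := σ.injective h2
  omega

lemma eq_one_of_fixes {σ : Equiv.Perm ℕ} {t : ℕ} (h : ∀ x, x ≠ t → σ x = x) : σ = 1 := by
  ext x
  rcases eq_or_ne x t with rfl | hx
  · show σ x = x
    by_contra h1
    have h2 : σ (σ x) = σ x := h _ (fun he => h1 he)
    have := σ.injective h2
    exact h1 this
  · exact h x hx

lemma sTr_mem_parab {k₁ k₂ i : ℕ} (h1 : k₁ ≤ i) (h2 : i ≤ k₂) : sTr i ∈ parab k₁ k₂ :=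
  Subgroup.subset_closure ⟨i, h1, h2, rfl⟩

lemma parab_mono {k₁ k₂ k₂' : ℕ} (h : k₂ ≤ k₂') : parab k₁ k₂ ≤ parab k₁ k₂' :=
  Subgroup.closure_mono (fun _ ⟨i, h1, h2, he⟩ => ⟨i, h1, h2.trans h, he⟩)

lemma mem_parab_of_fixes {k₁ : ℕ} (hk₁ : 1 ≤ k₁) :
    ∀ k₂ (σ : Equiv.Perm ℕ), (∀ x, x < k₁ → σ x = x) → (∀ x, k₂ + 1 < x → σ x = x) →
      σ ∈ parab k₁ k₂ := by
  intro k₂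
  induction k₂ using Nat.strong_induction_on with
  | _ k₂ IH =>
  suffices H : ∀ d (σ : Equiv.Perm ℕ), k₂ + 1 - σ (k₂+1) ≤ d →
      (∀ x, x < k₁ → σ x = x) → (∀ x, k₂ + 1 < x → σ x = x) → σ ∈ parab k₁ k₂ by
    intro σ hlo hhi; exact H _ σ le_rfl hlo hhi
  intro d
  induction d with
  | zero =>
    intro σ hd hlo hhi
    by_cases hk : k₂ + 1 ≤ k₁
    · have : σ = 1 := eq_one_of_fixes (t := k₁) (fun x hx => by
        rcases lt_or_gt_of_ne hx with h | h
        · exact hlo x h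
        · exact hhi x (by omega))
      rw [this]; exact Subgroup.one_mem _
    · push_neg at hk
      have hmaps := maps_interval hlo hhi (x := k₂ + 1) (by omega) le_rfl
      have hfix : σ (k₂ + 1) = k₂ + 1 := by omega
      have hk₂ : 1 ≤ k₂ := by omega
      have := IH (k₂ - 1) (by omega) σ hlo (fun x hx => by
        rcases eq_or_lt_of_le (show k₂ + 1 ≤ x by omega) with he | hlt
        · rw [← he]; exact hfix
        · exact hhi x hlt)
      exact parab_mono (by omega) this
    | succ d ihd =>
      intro σ hd hlo hhi
      by_cases hfix : σ (k₂ + 1) = k₂ + 1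
      · exact ihd σ (by omega) hlo hhi
      · by_cases hk : k₂ + 1 ≤ k₁
        · have : σ = 1 := eq_one_of_fixes (t := k₁) (fun x hx => by
            rcases lt_or_gt_of_ne hx with h | h
            · exact hlo x h
            · exact hhi x (by omega))
          rw [this]; exact Subgroup.one_mem _
        · push_neg at hk
          have hmaps := maps_interval hlo hhi (x := k₂ + 1) (by omega) le_rfl
          set y := σ (k₂ + 1) with hy
          have hylt : y < k₂ + 1 := by omega
          have hyk : k₁ ≤ y := hmaps.1
          set σ' := sTr y * σ with hσ'
          have hσ'app : ∀ x, σ' x = Equiv.swap y (y+1) (σ x) := fun x => rfl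
          have hσ'top : σ' (k₂ + 1) = y + 1 := by
            rw [hσ'app, ← hy, Equiv.swap_apply_left]
          have h1 : σ' ∈ parab k₁ k₂ := by
            apply ihd σ' (by omega)
            · intro x hx
              rw [hσ'app, hlo x hx, Equiv.swap_apply_of_ne_of_ne] <;> omega
            · intro x hx
              rw [hσ'app, hhi x hx, Equiv.swap_apply_of_ne_of_ne] <;> omega
          have hst : sTr y ∈ parab k₁ k₂ := sTr_mem_parab hyk (by omega)
          have : σ = sTr y * σ' := by
            rw [hσ', ← mul_assoc]
            simp [sTr, Equiv.swap_mul_self]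
          rw [this]
          exact Subgroup.mul_mem _ hst h1

lemma chain {σ : Equiv.Perm ℕ} {A B : ℕ}
    (H : ∀ a b, A ≤ a → a < b → b ≤ B → σ a < σ b) :
    ∀ d a, A ≤ a → a + d ≤ B → σ a + d ≤ σ (a + d) := by
  intro d
  induction d with
  | zero => intro a _ _; simp
  | succ d ih =>
    intro a ha hb
    have h1 := ih a ha (by omega)
    have h2 := H (a + d) (a + d + 1) (by omega) (by omega) (by omega)
    have he : a + (d + 1) = a + d + 1 := by omega
    rw [he]
    omega

theorem Equiv.Perm.apply_inv_self {α : Type*} (f : Equiv.Perm α) (x : α) : f (f⁻¹ x) = x :=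
  f.apply_symm_apply x

lemma inv_fixes {σ : Equiv.Perm ℕ} {x : ℕ} (h : σ x = x) : σ⁻¹ x = x :=
  σ.injective (by rw [Equiv.Perm.apply_inv_self, h])

lemma small_vals {σ : Equiv.Perm ℕ} {l c u : ℕ} (hc : 1 ≤ c)
    (hu : c + u ≤ l + 2)
    (hlo : ∀ x, x < 1 → σ x = x) (hhi : ∀ x, l + 1 < x → σ x = x)
    (hm2 : ∀ a b, c + 1 ≤ a → a < b → b ≤ l + 1 → σ a < σ b)
    (hgeu : ∀ i, 1 ≤ i → i ≤ c → u ≤ σ i) :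
    ∀ j, 1 ≤ j → j + 1 ≤ u → σ (c + j) = j := by
  intro j hj1 hj2
  have σ0 : σ 0 = 0 := hlo 0 one_pos
  have hilo : ∀ x, x < 1 → σ⁻¹ x = x := fun x hx => inv_fixes (hlo x hx)
  have hihi : ∀ x, l + 1 < x → σ⁻¹ x = x := fun x hx => inv_fixes (hhi x hx)
  have hpre : ∀ v, 1 ≤ v → v + 1 ≤ u → c + 1 ≤ σ⁻¹ v ∧ σ⁻¹ v ≤ l + 1 := by
    intro v hv1 hv2
    have mi := maps_interval hilo hihi (x := v) hv1 (by omega)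
    refine ⟨?_, mi.2⟩
    by_contra h
    push_neg at h
    have := hgeu (σ⁻¹ v) mi.1 (by omega)
    rw [Equiv.Perm.apply_inv_self] at this
    omega
  have hσc1 : 1 ≤ σ (c + 1) := by
    by_contra h
    push_neg at h
    have : σ (c + 1) = σ 0 := by omega
    have := σ.injective this
    omega
  have hlow : j ≤ σ (c + j) := by
    have := chain hm2 (j - 1) (c + 1) le_rfl (by omega)
    have he : c + 1 + (j - 1) = c + j := by omega
    rw [he] at this
    omega
  have hup : σ (c + j) ≤ j := by
    by_contra h
    push_neg at h
    have key : ∀ v ∈ Finset.Icc 1 j, σ⁻¹ v ∈ Finset.Icc (c + 1) (c + j - 1) := by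
      intro v hv
      rw [Finset.mem_Icc] at hv ⊢
      have hp := hpre v hv.1 (by omega)
      refine ⟨hp.1, ?_⟩
      by_contra hge
      push_neg at hge
      rcases eq_or_lt_of_le (show c + j ≤ σ⁻¹ v by omega) with he | hlt
      · have : σ (σ⁻¹ v) = v := Equiv.Perm.apply_inv_self σ v
        rw [← he] at this
        omega
      · have := hm2 (c + j) (σ⁻¹ v) (by omega) hlt hp.2
        rw [Equiv.Perm.apply_inv_self] at this
        omega
    have hinj : Set.InjOn (σ⁻¹ : Equiv.Perm ℕ) ↑(Finset.Icc 1 j) :=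
      fun a _ b _ hab => (σ⁻¹).injective hab
    have := Finset.card_le_card_of_injOn (σ⁻¹ : Equiv.Perm ℕ) key hinj
    rw [Nat.card_Icc, Nat.card_Icc] at this
    omega
  omega

lemma inv_subset {σ : Equiv.Perm ℕ} {k₁ L : ℕ}
    (hlo : ∀ x, x < k₁ → σ x = x) (hhi : ∀ x, L < x → σ x = x) :
    {q : ℕ × ℕ | q.1 < q.2 ∧ σ q.2 < σ q.1} ⊆ Set.Icc k₁ L ×ˢ Set.Icc k₁ L := by
  rintro ⟨a, b⟩ ⟨hab, hinv⟩
  simp only [Set.mem_setOf_eq] at hab hinv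
  have ha : k₁ ≤ a := by
    by_contra h
    push_neg at h
    have h1 : σ a = a := hlo a h
    have h3 : σ (σ b) = σ b := hlo _ (by omega)
    have := σ.injective h3
    omega
  have hb : b ≤ L := by
    by_contra h
    push_neg at h
    have h1 : σ b = b := hhi b h
    have h3 : σ (σ a) = σ a := hhi _ (by omega)
    have := σ.injective h3
    omega
  exact ⟨⟨ha, by omega⟩, by omega, hb⟩

lemma inv_finite {σ : Equiv.Perm ℕ} {k₁ L : ℕ}
    (hlo : ∀ x, x < k₁ → σ x = x) (hhi : ∀ x, L < x → σ x = x) :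
    Set.Finite {q : ℕ × ℕ | q.1 < q.2 ∧ σ q.2 < σ q.1} :=
  Set.Finite.subset ((Set.finite_Icc k₁ L).prod (Set.finite_Icc k₁ L))
    (inv_subset hlo hhi)

/-- every `ω ∈ S^{(c)}_{[l]} = (S_n)^{(c)}_{[1,l]}` factors uniquely
as `ω = ζ · δ_u` with `u = ω(1) ∈ [1, l-c+2]`, `δ_u ∈ S^{(c)}_{[l]}` the element
with `δ_u(i) = u + i − 1` for `1 ≤ i ≤ c`, and
`ζ ∈ (S_n)^{(c+u−1)}_{[u+1,l]}`; moreover `ℓ(ω) = ℓ(ζ) + ℓ(δ_u)`. -/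
theorem stmt16 (n l c : ℕ) (hn : 3 ≤ n) (hl2 : 2 ≤ l) (hln : l ≤ n - 1)
    (hc2 : 2 ≤ c) (hcl : c ≤ l)
    (ω : Equiv.Perm ℕ) (hω : ω ∈ PQ 1 l c)
    (δ : Equiv.Perm ℕ) (hδ : δ ∈ PQ 1 l c)
    (hδval : ∀ i : ℕ, 1 ≤ i → i ≤ c → δ i = ω 1 + i - 1) :
    (1 ≤ ω 1 ∧ ω 1 ≤ l - c + 2) ∧
    (∃! ζ : Equiv.Perm ℕ, ζ ∈ PQ (ω 1 + 1) l (c + ω 1 - 1) ∧ ω = ζ * δ) ∧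
    (∀ ζ : Equiv.Perm ℕ, ζ ∈ PQ (ω 1 + 1) l (c + ω 1 - 1) → ω = ζ * δ →
      invCount ω = invCount ζ + invCount δ) := by
  obtain ⟨hωp, hωm1, hωm2⟩ := hω
  obtain ⟨hδp, hδm1, hδm2⟩ := hδ
  set u := ω 1 with hu
  have hωlo : ∀ x, x < 1 → ω x = x := parab_fixes_lo hωp
  have hωhi : ∀ x, l + 1 < x → ω x = x := parab_fixes_hi hωp
  have hδlo : ∀ x, x < 1 → δ x = x := parab_fixes_lo hδp
  have hδhi : ∀ x, l + 1 < x → δ x = x := parab_fixes_hi hδp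
  have hu1 : 1 ≤ u := (maps_interval hωlo hωhi (x := 1) le_rfl (by omega)).1
  have hωc : ω c ≤ l + 1 := (maps_interval hωlo hωhi (x := c) (by omega) (by omega)).2
  have hchainω : u + (c - 1) ≤ ω c := by
    have := chain hωm1 (c - 1) 1 le_rfl (by omega)
    have he : 1 + (c - 1) = c := by omega
    rw [he] at this
    omega
  have hu2 : u ≤ l - c + 2 := by omega
  have hcu : c + u ≤ l + 2 := by omega
  have hωgeu : ∀ i, 1 ≤ i → i ≤ c → u ≤ ω i := by
    intro i h1 h2
    rcases eq_or_lt_of_le h1 with he | hlt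
    · rw [← he]
    · exact le_of_lt (hωm1 1 i le_rfl hlt h2)
  have hδgeu : ∀ i, 1 ≤ i → i ≤ c → u ≤ δ i := by
    intro i h1 h2
    rw [hδval i h1 h2]
    omega
  have ωcj : ∀ j, 1 ≤ j → j + 1 ≤ u → ω (c + j) = j :=
    small_vals (by omega) hcu hωlo hωhi hωm2 hωgeu
  have δcj : ∀ j, 1 ≤ j → j + 1 ≤ u → δ (c + j) = j :=
    small_vals (by omega) hcu hδlo hδhi hδm2 hδgeu
  -- δ fixes [c+u, ∞)
  have cover : ∀ y, 1 ≤ y → y + 1 ≤ c + u → ∃ i, 1 ≤ i ∧ i + 1 ≤ c + u ∧ δ i = y := by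
    intro y hy1 hy2
    by_cases hyu : u ≤ y
    · refine ⟨y - u + 1, by omega, by omega, ?_⟩
      rw [hδval (y - u + 1) (by omega) (by omega)]
      omega
    · exact ⟨c + y, by omega, by omega, δcj y hy1 (by omega)⟩
  have hδgehigh : ∀ x, c + u ≤ x → x ≤ l + 1 → c + u ≤ δ x := by
    intro x hx1 hx2
    by_contra h
    push_neg at h
    have hδx1 : 1 ≤ δ x := (maps_interval hδlo hδhi (x := x) (by omega) hx2).1
    obtain ⟨i, hi1, hi2, hie⟩ := cover (δ x) hδx1 (by omega)
    have := δ.injective hie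
    omega
  have hδge : ∀ x, c + u ≤ x → x ≤ l + 1 → x ≤ δ x := by
    intro x hx1 hx2
    have hb := hδgehigh (c + u) le_rfl (by omega)
    have := chain hδm2 (x - (c + u)) (c + u) (by omega) (by omega)
    have he : c + u + (x - (c + u)) = x := by omega
    rw [he] at this
    omega
  have hδid1 : ∀ x, c + u ≤ x → x ≤ l + 1 → δ x = x := by
    suffices H : ∀ m x, l + 1 - x ≤ m → c + u ≤ x → x ≤ l + 1 → δ x = x by
      intro x hx1 hx2; exact H _ x le_rfl hx1 hx2
    intro m
    induction m with
    | zero =>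
      intro x hm hx1 hx2
      have h1 := hδge x hx1 hx2
      have h2 := (maps_interval hδlo hδhi (x := x) (by omega) hx2).2
      omega
    | succ m ih =>
      intro x hm hx1 hx2
      have h1 := hδge x hx1 hx2
      rcases eq_or_lt_of_le h1 with he | hlt
      · omega
      · exfalso
        have h2 := (maps_interval hδlo hδhi (x := x) (by omega) hx2).2
        have h3 := ih (δ x) (by omega) (by omega) h2
        have := δ.injective h3
        omega
  have hδid : ∀ x, c + u ≤ x → δ x = x := by
    intro x hx
    by_cases h : x ≤ l + 1
    · exact hδid1 x hx h
    · exact hδhi x (by omega)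
  -- inverse values of δ
  have hδ1 : δ 1 = u := by
    rw [hδval 1 le_rfl (by omega)]
    omega
  have hδinv_small : ∀ x, 1 ≤ x → x + 1 ≤ u → δ⁻¹ x = c + x := by
    intro x h1 h2
    apply δ.injective
    rw [Equiv.Perm.apply_inv_self, δcj x h1 h2]
  have hδinv_mid : ∀ x, u ≤ x → x + 1 ≤ u + c → δ⁻¹ x = x - u + 1 := by
    intro x h1 h2
    have he : δ (x - u + 1) = x := by
      rw [hδval (x - u + 1) (by omega) (by omega)]
      omega
    apply δ.injective
    rw [Equiv.Perm.apply_inv_self, he]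
  have hδinv_high : ∀ x, c + u ≤ x → δ⁻¹ x = x := fun x h => inv_fixes (hδid x h)
  have hδinv0 : δ⁻¹ 0 = 0 := inv_fixes (hδlo 0 one_pos)
  -- ζ₀ := ω δ⁻¹
  set ζ₀ := ω * δ⁻¹ with hζ₀
  have zapp : ∀ x, ζ₀ x = ω (δ⁻¹ x) := fun _ => rfl
  have zlo : ∀ x, x < u + 1 → ζ₀ x = x := by
    intro x hx
    rcases Nat.eq_zero_or_pos x with rfl | hx0
    · rw [zapp, hδinv0]; exact hωlo 0 one_pos
    · by_cases hxu : x = u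
      · subst hxu
        have hdi : δ⁻¹ u = 1 := by
          apply δ.injective
          rw [Equiv.Perm.apply_inv_self, hδ1]
        rw [zapp, hdi]
      · rw [zapp, hδinv_small x hx0 (by omega)]
        exact ωcj x hx0 (by omega)
  have zhi : ∀ x, l + 1 < x → ζ₀ x = x := by
    intro x hx
    rw [zapp, inv_fixes (hδhi x hx)]
    exact hωhi x hx
  have zp : ζ₀ ∈ parab (u + 1) l := mem_parab_of_fixes (by omega) l ζ₀ zlo zhi
  have zm1 : ∀ a b, u + 1 ≤ a → a < b → b ≤ c + u - 1 → ζ₀ a < ζ₀ b := by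
    intro a b ha hab hb
    rw [zapp, zapp, hδinv_mid a (by omega) (by omega), hδinv_mid b (by omega) (by omega)]
    exact hωm1 (a - u + 1) (b - u + 1) (by omega) (by omega) (by omega)
  have zm2 : ∀ a b, (c + u - 1) + 1 ≤ a → a < b → b ≤ l + 1 → ζ₀ a < ζ₀ b := by
    intro a b ha hab hb
    rw [zapp, zapp, hδinv_high a (by omega), hδinv_high b (by omega)]
    exact hωm2 a b (by omega) hab hb
  have zPQ : ζ₀ ∈ PQ (u + 1) l (c + u - 1) := ⟨zp, zm1, zm2⟩
  have hfac0 : ω = ζ₀ * δ := (inv_mul_cancel_right ω δ).symm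
  refine ⟨⟨hu1, hu2⟩, ⟨ζ₀, ⟨zPQ, hfac0⟩, fun ζ' h' => eq_mul_inv_iff_mul_eq.mpr h'.2.symm⟩, ?_⟩
  -- Part 3: length additivity
  intro ζ hζ hfac
  obtain ⟨hζp, hζm1, hζm2⟩ := hζ
  have hζlo : ∀ x, x < u + 1 → ζ x = x := parab_fixes_lo hζp
  have hζhi : ∀ x, l + 1 < x → ζ x = x := parab_fixes_hi hζp
  have hωζδ : ∀ x, ω x = ζ (δ x) := fun x => by rw [hfac]; rfl
  set Iω := {q : ℕ × ℕ | q.1 < q.2 ∧ ω q.2 < ω q.1} with hIω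
  set Iζ := {q : ℕ × ℕ | q.1 < q.2 ∧ ζ q.2 < ζ q.1} with hIζ
  set Iδ := {q : ℕ × ℕ | q.1 < q.2 ∧ δ q.2 < δ q.1} with hIδ
  set A := {q : ℕ × ℕ | q.1 < q.2 ∧ ω q.2 < ω q.1 ∧ δ q.1 < δ q.2} with hA
  have finω : Iω.Finite := inv_finite hωlo hωhi
  have finδ : Iδ.Finite := inv_finite hδlo hδhi
  have finζ : Iζ.Finite := inv_finite hζlo hζhi
  have finA : A.Finite := finω.subset (fun q hq => ⟨hq.1, hq.2.1⟩)
  -- structure of inversions of δ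
  have keyδ : ∀ a b : ℕ, a < b → δ b < δ a →
      1 ≤ a ∧ a ≤ c ∧ c + 1 ≤ b ∧ b + 1 ≤ c + u := by
    intro a b hab hinv
    have hmem := inv_subset hδlo hδhi (show (a, b) ∈ _ from ⟨hab, hinv⟩)
    simp only [Set.mem_prod, Set.mem_Icc] at hmem
    have hac : a ≤ c := by
      by_contra h
      push_neg at h
      have := hδm2 a b (by omega) hab (by omega)
      omega
    have hbc : c + 1 ≤ b := by
      by_contra h
      push_neg at h
      have := hδm1 a b (by omega) hab (by omega)
      omega
    have hbu : b + 1 ≤ c + u := by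
      by_contra h
      push_neg at h
      have h1 : δ b = b := hδid b (by omega)
      have h2 : δ a = u + a - 1 := hδval a (by omega) hac
      omega
    exact ⟨by omega, hac, hbc, hbu⟩
  have hIδIω : ∀ a b : ℕ, a < b → δ b < δ a → ω b < ω a := by
    intro a b hab hinv
    obtain ⟨ha1, hac, hbc, hbu⟩ := keyδ a b hab hinv
    have hδb : δ b = b - c := by
      have := δcj (b - c) (by omega) (by omega)
      rw [show c + (b - c) = b by omega] at this
      exact this
    have hδa : δ a = u + a - 1 := hδval a ha1 hac
    have hωb : ω b = b - c := by
      rw [hωζδ, hδb]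
      exact hζlo (b - c) (by omega)
    rcases eq_or_lt_of_le (show u ≤ δ a by omega) with he | hlt
    · have : ω a = u := by
        rw [hωζδ, ← he]
        exact hζlo u (by omega)
      omega
    · have hδal : δ a ≤ l + 1 := by omega
      have := (maps_interval hζlo hζhi (x := δ a) (by omega) hδal).1
      rw [← hωζδ] at this
      omega
  have AunionB : Iω = A ∪ Iδ := by
    ext ⟨a, b⟩
    constructor
    · rintro ⟨hab, hinv⟩
      rcases lt_trichotomy (δ a) (δ b) with h | h | h
      · exact Or.inl ⟨hab, hinv, h⟩
      · exact absurd (δ.injective h) (by omega)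
      · exact Or.inr ⟨hab, h⟩
    · rintro (⟨h1, h2, _⟩ | ⟨h1, h2⟩)
      · exact ⟨h1, h2⟩
      · exact ⟨h1, hIδIω a b h1 h2⟩
  have disj : Disjoint A Iδ := by
    rw [Set.disjoint_left]
    rintro ⟨a, b⟩ ⟨_, _, h3⟩ ⟨_, h⟩
    simp only at h3 h
    omega
  have cardsplit : Iω.ncard = A.ncard + Iδ.ncard := by
    rw [AunionB]
    exact Set.ncard_union_eq disj finA finδ
  -- A is in bijection with Iζ
  have himg : (Prod.map (δ : ℕ → ℕ) (δ : ℕ → ℕ)) '' A = Iζ := by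
    apply Set.Subset.antisymm
    · rintro ⟨p, q⟩ ⟨⟨a, b⟩, ⟨hab, hinv, hδab⟩, heq⟩
      simp only [Prod.map, Prod.mk.injEq] at heq
      obtain ⟨hp, hq⟩ := heq
      subst hp; subst hq
      refine ⟨hδab, ?_⟩
      show ζ (δ b) < ζ (δ a)
      rw [← hωζδ, ← hωζδ]
      exact hinv
    · rintro ⟨p, q⟩ ⟨hpq, hinv⟩
      have hmem := inv_subset hζlo hζhi (show (p, q) ∈ _ from ⟨hpq, hinv⟩)
      simp only [Set.mem_prod, Set.mem_Icc] at hmem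
      refine ⟨(δ⁻¹ p, δ⁻¹ q), ⟨?_, ?_, ?_⟩, ?_⟩
      · -- δ⁻¹ p < δ⁻¹ q
        show δ⁻¹ p < δ⁻¹ q
        by_cases hp : p + 1 ≤ u + c
        · rw [hδinv_mid p (by omega) hp]
          by_cases hq : q + 1 ≤ u + c
          · rw [hδinv_mid q (by omega) hq]
            omega
          · rw [hδinv_high q (by omega)]
            omega
        · rw [hδinv_high p (by omega)]
          by_cases hq : q + 1 ≤ u + c
          · omega
          · rw [hδinv_high q (by omega)]
            omega
      · show ω (δ⁻¹ q) < ω (δ⁻¹ p)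
        rw [hωζδ, hωζδ, Equiv.Perm.apply_inv_self, Equiv.Perm.apply_inv_self]
        exact hinv
      · show δ (δ⁻¹ p) < δ (δ⁻¹ q)
        rw [Equiv.Perm.apply_inv_self, Equiv.Perm.apply_inv_self]
        exact hpq
      · simp [Prod.map, Equiv.Perm.apply_inv_self]
  have hprodinj : Function.Injective (Prod.map (δ : ℕ → ℕ) (δ : ℕ → ℕ)) := by
    intro x y h
    simp only [Prod.map, Prod.mk.injEq] at h
    exact Prod.ext (δ.injective h.1) (δ.injective h.2)
  have cardA : A.ncard = Iζ.ncard := by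
    rw [← himg, Set.ncard_image_of_injective A hprodinj]
  show Iω.ncard = Iζ.ncard + Iδ.ncard
  omega
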